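/- With N = diag(1, ω, ω), right multiplication by N maps Λ_{j,k} onto Λ_{j+k,k} for all integers j, k, i.e. Λ_{j,k} N = Λ_{j+k,k}. -/

import Mathlib

noncomputable section
open Complex

/-- `ω = exp(2πi/3)`. -/
def ω : ℂ := Complex.exp (2 * Real.pi * Complex.I / 3)

/-- `λ = ω - ω² = √-3`. -/
def lam : ℂ := ω - ω ^ 2

/-- `x` is an Eisenstein integer, i.e. `x ∈ 𝒪 = ℤ[ω]`. -/
def isO (x : ℂ) : Prop := ∃ m n : ℤ, x = (m : ℂ) + (n : ℂ) * ω

/-- `Λ_{j,k} = {α ∈ 𝒪³ + k(1/λ,1/λ,1/λ) : α₀+α₁+α₂ ≡ j (mod λ𝒪)}`. -/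
def LamSet (j k : ℤ) : Set (Fin 3 → ℂ) :=
  {α | (∀ i, isO (α i - k / lam)) ∧ isO ((α 0 + α 1 + α 2 - j) / lam)}

/-- The matrix `N = diag(1, ω, ω)`. -/
def N : Matrix (Fin 3) (Fin 3) ℂ := Matrix.diagonal ![1, ω, ω]

lemma hω3 : ω ^ 3 = 1 := by
  unfold ω
  rw [← Complex.exp_nat_mul]
  rw [show (3 : ℕ) * (2 * (Real.pi:ℂ) * Complex.I / 3) = 2 * Real.pi * Complex.I by push_cast; ring]
  exact Complex.exp_two_pi_mul_I

lemma hω_ne : ω ≠ 1 := by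
  have h : ω.im = Real.sin (2 * Real.pi / 3) := by
    unfold ω
    rw [show (2 * (Real.pi:ℂ) * Complex.I / 3) = ((2 * Real.pi / 3 : ℝ) : ℂ) * Complex.I by
      push_cast; ring]
    exact Complex.exp_ofReal_mul_I_im _
  have hpos : 0 < Real.sin (2 * Real.pi / 3) := by
    apply Real.sin_pos_of_pos_of_lt_pi <;> nlinarith [Real.pi_pos]
  intro hc
  rw [hc] at h
  simp at h
  linarith [h ▸ hpos]

lemma hωsq : ω ^ 2 + ω + 1 = 0 := by
  have h2 : (ω - 1) * (ω ^ 2 + ω + 1) = 0 := by linear_combination hω3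
  rcases mul_eq_zero.mp h2 with h3 | h3
  · exact absurd (by linear_combination h3) hω_ne
  · exact h3

lemma lam_ne : lam ≠ 0 := by
  intro h
  have h2 : lam ^ 2 = -3 := by
    unfold lam; linear_combination hωsq + (ω - 2) * hω3
  rw [h] at h2
  norm_num at h2

lemma key1 : lam * (1 + ω) = ω - 1 := by
  unfold lam; linear_combination -hω3

lemma key2 : lam * ω = ω ^ 2 - 1 := by
  unfold lam; linear_combination -hω3

lemma isO_add {x y : ℂ} (hx : isO x) (hy : isO y) : isO (x + y) := by
  obtain ⟨m, n, rfl⟩ := hx; obtain ⟨p, q, rfl⟩ := hy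
  exact ⟨m + p, n + q, by push_cast; ring⟩

lemma isO_sub {x y : ℂ} (hx : isO x) (hy : isO y) : isO (x - y) := by
  obtain ⟨m, n, rfl⟩ := hx; obtain ⟨p, q, rfl⟩ := hy
  exact ⟨m - p, n - q, by push_cast; ring⟩

lemma isO_mul {x y : ℂ} (hx : isO x) (hy : isO y) : isO (x * y) := by
  obtain ⟨m, n, rfl⟩ := hx; obtain ⟨p, q, rfl⟩ := hy
  refine ⟨m * p - n * q, m * q + n * p - n * q, ?_⟩
  push_cast
  linear_combination (n * q : ℂ) * hωsq

lemma isO_int (n : ℤ) : isO (n : ℂ) := ⟨n, 0, by push_cast; ring⟩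

lemma isO_one : isO (1 : ℂ) := ⟨1, 0, by push_cast; ring⟩

lemma isO_omega : isO ω := ⟨0, 1, by push_cast; ring⟩

lemma isO_omega2 : isO (ω ^ 2) := ⟨-1, -1, by push_cast; linear_combination hωsq⟩

lemma hω0 : ω ≠ 0 := by intro h; have := hω3; rw [h] at this; norm_num at this

lemma h1ω : 1 - ω ≠ 0 := fun h => hω_ne (by linear_combination -h)

lemma eqA (x : ℂ) (k : ℤ) : ω * x - k / lam = ω * (x - k / lam) + k * (1 + ω) := by
  have hne : ω - ω ^ 2 ≠ 0 := by rw [show ω - ω ^ 2 = lam from rfl]; exact lam_ne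
  rw [show lam = ω - ω ^ 2 from rfl]
  field_simp [hω0, h1ω]
  linear_combination (k : ℂ) * hω3

lemma eqB (x : ℂ) (k : ℤ) : ω ^ 2 * x - k / lam = ω ^ 2 * (x - k / lam) + ω * k := by
  have hne : ω - ω ^ 2 ≠ 0 := by rw [show ω - ω ^ 2 = lam from rfl]; exact lam_ne
  rw [show lam = ω - ω ^ 2 from rfl]
  field_simp [hω0, h1ω]
  linear_combination (k : ℂ) * hω3

lemma eqSumF (a0 a1 a2 : ℂ) (j k : ℤ) :
    (a0 + ω * a1 + ω * a2 - ((j + k : ℤ) : ℂ)) / lam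
      = ω * ((a0 + a1 + a2 - j) / lam) - (1 + ω) * (a0 - k / lam)
        + ((1 + ω) * j + ω * k) := by
  have hne : ω - ω ^ 2 ≠ 0 := by rw [show ω - ω ^ 2 = lam from rfl]; exact lam_ne
  rw [show lam = ω - ω ^ 2 from rfl]
  field_simp [hω0, h1ω]
  push_cast
  linear_combination ((j:ℂ) + (k:ℂ) - a0) * hω3 + (-(k:ℂ)) * hωsq

lemma eqSumB (b0 b1 b2 : ℂ) (j k : ℤ) :
    (b0 + ω ^ 2 * b1 + ω ^ 2 * b2 - j) / lam
      = ω ^ 2 * ((b0 + b1 + b2 - ((j + k : ℤ) : ℂ)) / lam) - ω * (b0 - k / lam)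
        + (ω * j - k) := by
  have hne : ω - ω ^ 2 ≠ 0 := by rw [show ω - ω ^ 2 = lam from rfl]; exact lam_ne
  rw [show lam = ω - ω ^ 2 from rfl]
  field_simp [hω0, h1ω]
  push_cast
  linear_combination ((j:ℂ) - b0) * hω3

/-- Right multiplication by `N` maps `Λ_{j,k}` onto `Λ_{j+k,k}`. -/
theorem LamSet_mul_N (j k : ℤ) :
    (fun α => Matrix.vecMul α N) '' LamSet j k = LamSet (j + k) k := by
  have hvec : ∀ α : Fin 3 → ℂ, Matrix.vecMul α N = ![α 0, ω * α 1, ω * α 2] := by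
    intro α
    funext i
    rw [N, Matrix.vecMul_diagonal]
    fin_cases i <;> simp <;> ring
  ext β
  constructor
  · rintro ⟨α, ⟨h1, h2⟩, rfl⟩
    simp only [hvec]
    refine ⟨?_, ?_⟩
    · intro i
      fin_cases i
      · exact h1 0
      · show isO (ω * α 1 - (k : ℂ) / lam)
        rw [eqA]
        exact isO_add (isO_mul isO_omega (h1 1))
          (isO_mul (isO_int k) (isO_add isO_one isO_omega))
      · show isO (ω * α 2 - (k : ℂ) / lam)
        rw [eqA]
        exact isO_add (isO_mul isO_omega (h1 2))
          (isO_mul (isO_int k) (isO_add isO_one isO_omega))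
    · show isO ((α 0 + ω * α 1 + ω * α 2 - ((j + k : ℤ) : ℂ)) / lam)
      rw [eqSumF]
      exact isO_add
        (isO_sub (isO_mul isO_omega h2)
          (isO_mul (isO_add isO_one isO_omega) (h1 0)))
        (isO_add (isO_mul (isO_add isO_one isO_omega) (isO_int j))
          (isO_mul isO_omega (isO_int k)))
  · rintro ⟨h1, h2⟩
    refine ⟨![β 0, ω ^ 2 * β 1, ω ^ 2 * β 2], ⟨?_, ?_⟩, ?_⟩
    · intro i
      fin_cases i
      · exact h1 0
      · show isO (ω ^ 2 * β 1 - (k : ℂ) / lam)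
        rw [eqB]
        exact isO_add (isO_mul isO_omega2 (h1 1)) (isO_mul isO_omega (isO_int k))
      · show isO (ω ^ 2 * β 2 - (k : ℂ) / lam)
        rw [eqB]
        exact isO_add (isO_mul isO_omega2 (h1 2)) (isO_mul isO_omega (isO_int k))
    · show isO ((β 0 + ω ^ 2 * β 1 + ω ^ 2 * β 2 - (j : ℂ)) / lam)
      rw [eqSumB]
      exact isO_add
        (isO_sub (isO_mul isO_omega2 h2) (isO_mul isO_omega (h1 0)))
        (isO_sub (isO_mul isO_omega (isO_int j)) (isO_int k))
    · show Matrix.vecMul _ N = β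
      rw [hvec]
      funext i
      fin_cases i
      · rfl
      · show ω * (ω ^ 2 * β 1) = β 1
        linear_combination (β 1) * hω3
      · show ω * (ω ^ 2 * β 2) = β 2
        linear_combination (β 2) * hω3
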